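/- arXiv:1310.3191 — 3 statements merged into one kernel-verified Lean document; each statement's English description precedes it below -/
import Mathlib

section
/- Let $R$ be a commutative associative ring (over $\mathbb{Z}$) that is free as a $\mathbb{Z}$-module with basis $\{e_u\}_{u\in I}$, with structure constants $e_u\cdot e_v=\sum_w c_{u,v}^w e_w$. Suppose $\gamma\colon I\to \mathbb{Z}^S$ is a function (for a finite set $S$) such that whenever $c_{u,v}^w\neq 0$ one has $\gamma(w)-\gamma(u)-\gamma(v)\geq 0$ componentwise. Then the product on $R\otimes_{\mathbb{Z}}\mathbb{Z}[\tau_i]_{i\in S}$ defined by $e_u\odot_\tau e_v=\sum_w \tau^{\gamma(w)-\gamma(u)-\gamma(v)}c_{u,v}^w e_w$ is commutative and associative. -/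
open Finset MvPolynomial

noncomputable section

/-- The structure constants of the deformed product `⊙_τ`:
`e_u ⊙_τ e_v = ∑_w τ^(γ(w) - γ(u) - γ(v)) c_{u,v}^w e_w`, as elements of
`ℤ[τ_i : i ∈ S]`. -/
def deformedConst {I S : Type*} [Fintype S]
    (c : I → I → I → ℤ) (γ : I → S → ℤ) (u v w : I) : MvPolynomial S ℤ :=
  (∏ i, X i ^ (γ w i - γ u i - γ v i).toNat) * C (c u v w)

lemma deformedConst_mul {I S : Type*} [Fintype S]
    (c : I → I → I → ℤ) (γ : I → S → ℤ)
    (hγ : ∀ u v w, c u v w ≠ 0 → ∀ i, γ u i + γ v i ≤ γ w i)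
    (u v w x y : I) :
    deformedConst c γ u v y * deformedConst c γ y w x
      = (∏ i, X i ^ (γ x i - γ u i - γ v i - γ w i).toNat) * C (c u v y * c y w x) := by
  by_cases h1 : c u v y = 0
  · simp [deformedConst, h1]
  by_cases h2 : c y w x = 0
  · simp [deformedConst, h2]
  have h1' := hγ u v y h1
  have h2' := hγ y w x h2
  unfold deformedConst
  rw [map_mul, mul_mul_mul_comm, ← Finset.prod_mul_distrib]
  congr 1
  refine Finset.prod_congr rfl fun i _ => ?_
  rw [← pow_add]
  congr 1
  have e1 : (0:ℤ) ≤ γ y i - γ u i - γ v i := by linarith [h1' i]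
  have e2 : (0:ℤ) ≤ γ x i - γ y i - γ w i := by linarith [h2' i]
  rw [← Int.toNat_add e1 e2]
  congr 1
  ring

lemma deformedConst_mul' {I S : Type*} [Fintype S]
    (c : I → I → I → ℤ) (γ : I → S → ℤ)
    (hγ : ∀ u v w, c u v w ≠ 0 → ∀ i, γ u i + γ v i ≤ γ w i)
    (u v w x y : I) :
    deformedConst c γ v w y * deformedConst c γ u y x
      = (∏ i, X i ^ (γ x i - γ v i - γ w i - γ u i).toNat) * C (c v w y * c u y x) := by
  by_cases h1 : c v w y = 0
  · simp [deformedConst, h1]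
  by_cases h2 : c u y x = 0
  · simp [deformedConst, h2]
  have h1' := hγ v w y h1
  have h2' := hγ u y x h2
  unfold deformedConst
  rw [map_mul, mul_mul_mul_comm, ← Finset.prod_mul_distrib]
  congr 1
  refine Finset.prod_congr rfl fun i _ => ?_
  rw [← pow_add]
  congr 1
  have e1 : (0:ℤ) ≤ γ y i - γ v i - γ w i := by linarith [h1' i]
  have e2 : (0:ℤ) ≤ γ x i - γ u i - γ y i := by linarith [h2' i]
  rw [← Int.toNat_add e1 e2]
  congr 1
  ring

/-- If `R` is a commutative associative ring, free over `ℤ` with basis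
`{e_u}_{u ∈ I}` and structure constants `c_{u,v}^w`, and `γ : I → ℤ^S` satisfies
`γ(w) - γ(u) - γ(v) ≥ 0` whenever `c_{u,v}^w ≠ 0`, then the product `⊙_τ` on
`R ⊗ ℤ[τ]` defined by `e_u ⊙_τ e_v = ∑_w τ^(γ(w)-γ(u)-γ(v)) c_{u,v}^w e_w` is commutative
and associative (equivalently, its structure constants satisfy the commutativity and
associativity identities). -/
theorem deformed_product_comm_assoc {I S : Type*} [Fintype I] [Fintype S]
    (c : I → I → I → ℤ)
    (hcomm : ∀ u v w, c u v w = c v u w)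
    (hassoc : ∀ u v w x, ∑ y, c u v y * c y w x = ∑ y, c v w y * c u y x)
    (γ : I → S → ℤ)
    (hγ : ∀ u v w, c u v w ≠ 0 → ∀ i, γ u i + γ v i ≤ γ w i) :
    (∀ u v w, deformedConst c γ u v w = deformedConst c γ v u w) ∧
    (∀ u v w x, ∑ y, deformedConst c γ u v y * deformedConst c γ y w x
        = ∑ y, deformedConst c γ v w y * deformedConst c γ u y x) := by
  constructor
  · intro u v w
    unfold deformedConst
    rw [hcomm]
    congr 1
    refine Finset.prod_congr rfl fun i _ => ?_
    congr 2
    ring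
  · intro u v w x
    have key : ∀ y, deformedConst c γ u v y * deformedConst c γ y w x
        = (∏ i, X i ^ (γ x i - γ u i - γ v i - γ w i).toNat) * C (c u v y * c y w x) :=
      deformedConst_mul c γ hγ u v w x
    have key2 : ∀ y, deformedConst c γ v w y * deformedConst c γ u y x
        = (∏ i, X i ^ (γ x i - γ v i - γ w i - γ u i).toNat) * C (c v w y * c u y x) :=
      deformedConst_mul' c γ hγ u v w x
    simp_rw [key, key2, ← Finset.mul_sum, ← map_sum, hassoc]
    congr 1
    refine Finset.prod_congr rfl fun i _ => ?_
    congr 2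
    ring
end
end

section
/- In the setting of the deformed product $\odot_\tau$ above, specializing all variables $\tau_i$ to $0$ yields a well-defined commutative associative product $e_u\odot_0 e_v=\sum'_w c_{u,v}^w e_w$, where the sum runs only over those $w$ with $\gamma(w)=\gamma(u)+\gamma(v)$; moreover this product is graded with respect to the $\mathbb{Z}^S$-grading given by $\gamma$. -/
open Finset

noncomputable section

/-- The structure constants of the specialization `⊙_0` at `τ = 0` of the deformed product:
`e_u ⊙_0 e_v = ∑'_w c_{u,v}^w e_w`, the sum running over `w` with `γ(w) = γ(u) + γ(v)`. -/
def zeroConst {I S : Type*} [Fintype S] [DecidableEq S]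
    (c : I → I → I → ℤ) (γ : I → S → ℤ) (u v w : I) : ℤ :=
  if γ w = γ u + γ v then c u v w else 0

theorem zeroConst_key {I S : Type*} [Fintype I] [Fintype S] [DecidableEq S]
    (c : I → I → I → ℤ) (γ : I → S → ℤ)
    (hγ : ∀ u v w, c u v w ≠ 0 → ∀ i, γ u i + γ v i ≤ γ w i)
    (u v w x : I) :
    ∑ y, zeroConst c γ u v y * zeroConst c γ y w x
      = if γ x = γ u + γ v + γ w then ∑ y, c u v y * c y w x else 0 := by
  split_ifs with h
  · apply Finset.sum_congr rfl
    intro y _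
    by_cases h1 : c u v y = 0
    · simp [zeroConst, h1]
    by_cases h2 : c y w x = 0
    · simp [zeroConst, h2]
    have hy : γ y = γ u + γ v := by
      funext i
      have a1 := hγ u v y h1 i
      have a2 := hγ y w x h2 i
      have := congrFun h i
      simp only [Pi.add_apply] at this ⊢
      omega
    have hx : γ x = γ y + γ w := by rw [hy, h]
    simp [zeroConst, hy, hx]
  · apply Finset.sum_eq_zero
    intro y _
    by_cases h1 : γ y = γ u + γ v
    · by_cases h2 : γ x = γ y + γ w
      · exact absurd (by rw [h2, h1]) h
      · simp [zeroConst, h2]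
    · simp [zeroConst, h1]

theorem zeroConst_key' {I S : Type*} [Fintype I] [Fintype S] [DecidableEq S]
    (c : I → I → I → ℤ) (γ : I → S → ℤ)
    (hγ : ∀ u v w, c u v w ≠ 0 → ∀ i, γ u i + γ v i ≤ γ w i)
    (u v w x : I) :
    ∑ y, zeroConst c γ v w y * zeroConst c γ u y x
      = if γ x = γ u + γ v + γ w then ∑ y, c v w y * c u y x else 0 := by
  split_ifs with h
  · apply Finset.sum_congr rfl
    intro y _
    by_cases h1 : c v w y = 0
    · simp [zeroConst, h1]
    by_cases h2 : c u y x = 0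
    · simp [zeroConst, h2]
    have hy : γ y = γ v + γ w := by
      funext i
      have a1 := hγ v w y h1 i
      have a2 := hγ u y x h2 i
      have := congrFun h i
      simp only [Pi.add_apply] at this ⊢
      omega
    have hx : γ x = γ u + γ y := by rw [hy, h, add_assoc]
    simp [zeroConst, hy, hx]
  · apply Finset.sum_eq_zero
    intro y _
    by_cases h1 : γ y = γ v + γ w
    · by_cases h2 : γ x = γ u + γ y
      · exact absurd (by rw [h2, h1, add_assoc]) h
      · simp [zeroConst, h2]
    · simp [zeroConst, h1]

/-- Setting all `τ_i = 0` in the deformed product `⊙_τ` yields a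
well-defined commutative associative product `e_u ⊙_0 e_v = ∑'_w c_{u,v}^w e_w` (sum over
`w` with `γ(w) = γ(u) + γ(v)`); moreover it is graded for the `ℤ^S`-grading given by `γ`:
nonzero structure constants only occur when `γ(w) = γ(u) + γ(v)`. -/
theorem zero_specialization_comm_assoc_graded {I S : Type*} [Fintype I] [Fintype S]
    [DecidableEq S]
    (c : I → I → I → ℤ)
    (hcomm : ∀ u v w, c u v w = c v u w)
    (hassoc : ∀ u v w x, ∑ y, c u v y * c y w x = ∑ y, c v w y * c u y x)
    (γ : I → S → ℤ)
    (hγ : ∀ u v w, c u v w ≠ 0 → ∀ i, γ u i + γ v i ≤ γ w i) :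
    (∀ u v w, zeroConst c γ u v w = zeroConst c γ v u w) ∧
    (∀ u v w x, ∑ y, zeroConst c γ u v y * zeroConst c γ y w x
        = ∑ y, zeroConst c γ v w y * zeroConst c γ u y x) ∧
    (∀ u v w, zeroConst c γ u v w ≠ 0 → γ w = γ u + γ v) := by
  refine ⟨fun u v w => by simp [zeroConst, hcomm u v w, add_comm (γ u) (γ v)], fun u v w x => ?_,
    fun u v w h => by by_contra hne; simp [zeroConst, hne] at h⟩
  rw [zeroConst_key c γ hγ u v w x, zeroConst_key' c γ hγ u v w x]
  split_ifs with h
  · exact hassoc u v w x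
  · rfl
end
end

section
/- Let $V$ be a finite-dimensional representation of $\mathfrak{sl}_2(\mathbb{C})$ with standard basis $E,F,H$. If $v\in V$ satisfies $Hv=-m\,v$ for a positive integer $m$, then there exists $v'\in V$ with $v=F^m v'$. -/
noncomputable section

namespace Sl2Helper

open Module Finset

open scoped Classical

variable {V : Type*} [AddCommGroup V] [Module ℂ V]

lemma comm_pow (A B : Module.End ℂ V) (c : ℂ) (h : A * B = B * A + c • B) (k : ℕ) :
    A * B ^ k = B ^ k * A + (c * k) • B ^ k := by
  induction k with
  | zero => simp
  | succ k ih =>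
    push_cast
    calc A * B ^ (k + 1) = (A * B ^ k) * B := by rw [pow_succ, mul_assoc]
    _ = (B ^ k * A + (c * k) • B ^ k) * B := by rw [ih]
    _ = B ^ k * (A * B) + (c * k) • B ^ (k + 1) := by
        rw [add_mul, smul_mul_assoc, mul_assoc, pow_succ]
    _ = B ^ k * (B * A) + B ^ k * (c • B) + (c * k) • B ^ (k + 1) := by rw [h, mul_add]
    _ = B ^ (k + 1) * A + (c * (k + 1)) • B ^ (k + 1) := by
        rw [mul_smul_comm, ← mul_assoc, ← pow_succ]
        module

lemma comm_pow_apply (A B : Module.End ℂ V) (c : ℂ) (h : A * B = B * A + c • B) (k : ℕ)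
    (x : V) : A ((B ^ k) x) = (B ^ k) (A x) + (c * k) • (B ^ k) x := by
  have := LinearMap.congr_fun (comm_pow A B c h k) x
  simpa using this

lemma eigen_indep [FiniteDimensional ℂ V] (g : Module.End ℂ V) {ι : Type*} (u : ι → V)
    (ev : ι → ℂ) (hinj : Function.Injective ev) (h : ∀ i, g (u i) = ev i • u i)
    (hne : ∀ i, u i ≠ 0) : LinearIndependent ℂ u :=
  g.eigenvectors_linearIndependent' ev hinj u fun i =>
    Module.End.hasEigenvector_iff.mpr ⟨Module.End.mem_eigenspace_iff.mpr (h i), hne i⟩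

lemma chain_eventually_zero [FiniteDimensional ℂ V] (g : Module.End ℂ V)
    (u : ℕ → V) (c₀ d : ℂ) (hd : d ≠ 0)
    (h : ∀ k, g (u k) = (c₀ + d * k) • u k) : ∃ k, u k = 0 := by
  by_contra hc
  push_neg at hc
  have li : LinearIndependent ℂ fun k : Fin (finrank ℂ V + 1) => u k := by
    refine eigen_indep g _ (fun k : Fin (finrank ℂ V + 1) => c₀ + d * (k : ℕ)) ?_
      (fun k => h k) (fun k => hc k)
    intro a b hab
    have : ((a : ℕ) : ℂ) = ((b : ℕ) : ℂ) := by
      field_simp at hab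
      exact mul_left_cancel₀ hd (add_left_cancel hab)
    exact Fin.ext (Nat.cast_injective this)
  have := li.fintype_card_le_finrank
  simp at this

universe u

theorem sl2_aux (N : ℕ) : ∀ {V : Type u} [AddCommGroup V] [Module ℂ V]
    [FiniteDimensional ℂ V] (E F H : Module.End ℂ V),
    H * E - E * H = (2 : ℂ) • E →
    H * F - F * H = (-2 : ℂ) • F →
    E * F - F * E = H →
    ∀ (m : ℕ) (v : V), H v = (-(m : ℂ)) • v → finrank ℂ V ≤ N →
    ∃ u : V, H u = (m : ℂ) • u ∧ v = (F ^ m) u := by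
  induction N with
  | zero =>
    intro V _ _ _ E F H _ _ _ m v hv hdim
    have hs : Subsingleton V := by
      rw [← Module.finrank_zero_iff (R := ℂ)]; omega
    refine ⟨0, by simp, ?_⟩
    rw [Subsingleton.elim v ((F ^ m) 0)]
  | succ N IH =>
    intro V _ _ _ E F H hHE hHF hEF m v hv hdim
    by_cases hv0 : v = 0
    · exact ⟨0, by simp, by simp [hv0]⟩
    haveI : Nontrivial V := nontrivial_of_ne v 0 hv0
    have hHE' : H * E = E * H + (2 : ℂ) • E := by
      rw [(sub_eq_iff_eq_add.mp hHE)]; abel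
    have hHF' : H * F = F * H + (-2 : ℂ) • F := by
      rw [(sub_eq_iff_eq_add.mp hHF)]; abel
    have hEFx : ∀ x : V, E (F x) = F (E x) + H x := by
      intro x
      have hx := LinearMap.congr_fun hEF x
      simp only [LinearMap.sub_apply, Module.End.mul_apply] at hx
      rw [sub_eq_iff_eq_add.mp hx]; abel
    have hFk : ∀ (k : ℕ) (x : V), H ((F ^ k) x) = (F ^ k) (H x) + ((-2 : ℂ) * k) • (F ^ k) x :=
      fun k x => comm_pow_apply H F (-2) hHF' k x
    -- eigenvector of H
    obtain ⟨c, hc⟩ := Module.End.exists_eigenvalue H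
    obtain ⟨z, hz⟩ := hc.exists_hasEigenvector
    have hz1 : H z = c • z := hz.apply_eq_smul
    have hz0 : z ≠ 0 := hz.2
    -- E-chain
    have hEchain : ∀ k : ℕ, H ((E ^ k) z) = (c + 2 * k) • (E ^ k) z := by
      intro k
      rw [comm_pow_apply H E 2 hHE' k z, hz1, map_smul]
      module
    have hexE : ∃ k, (E ^ k) z = 0 :=
      chain_eventually_zero H (fun k => (E ^ k) z) c 2 two_ne_zero hEchain
    have hn₁ : Nat.find hexE ≠ 0 := by
      intro h0
      have := Nat.find_spec hexE
      rw [h0] at this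
      simp at this
      exact hz0 this
    set w : V := (E ^ (Nat.find hexE - 1)) z with hwdef
    have hw0 : w ≠ 0 := Nat.find_min hexE (by omega)
    have hEw : E w = 0 := by
      have := Nat.find_spec hexE
      rw [show Nat.find hexE = (Nat.find hexE - 1) + 1 by omega] at this
      rw [pow_succ'] at this
      simpa using this
    set μc : ℂ := c + 2 * (Nat.find hexE - 1 : ℕ) with hμcdef
    have hHw : H w = μc • w := hEchain _
    -- F-chain
    have hFchain : ∀ j : ℕ, H ((F ^ j) w) = (μc + (-2) * j) • (F ^ j) w := by
      intro j
      rw [hFk j w, hHw, map_smul]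
      module
    have hexF : ∃ j, (F ^ j) w = 0 :=
      chain_eventually_zero H (fun j => (F ^ j) w) μc (-2) (neg_ne_zero.mpr two_ne_zero) hFchain
    have hn₂ : Nat.find hexF ≠ 0 := by
      intro h0
      have := Nat.find_spec hexF
      rw [h0] at this
      simp at this
      exact hw0 this
    set μ : ℕ := Nat.find hexF - 1 with hμdef
    have hwne : ∀ j : ℕ, j ≤ μ → (F ^ j) w ≠ 0 := fun j hj => Nat.find_min hexF (by omega)
    have hwtop : (F ^ (μ + 1)) w = 0 := by
      have := Nat.find_spec hexF
      rwa [show Nat.find hexF = μ + 1 by omega] at this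
    have hwzero : ∀ j : ℕ, μ < j → (F ^ j) w = 0 := by
      intro j hj
      rw [show j = (j - (μ + 1)) + (μ + 1) by omega, pow_add, Module.End.mul_apply, hwtop,
        map_zero]
    have hFwj : ∀ j : ℕ, F ((F ^ j) w) = (F ^ (j + 1)) w := by
      intro j
      rw [pow_succ', Module.End.mul_apply]
    have hFmwj : ∀ (k j : ℕ), (F ^ k) ((F ^ j) w) = (F ^ (j + k)) w := by
      intro k j
      rw [← Module.End.mul_apply, ← pow_add, Nat.add_comm]
    -- E acting on the chain
    have hEwj : ∀ j : ℕ, E ((F ^ (j + 1)) w) = ((j + 1 : ℂ) * (μc - j)) • (F ^ j) w := by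
      intro j
      induction j with
      | zero =>
        rw [← hFwj 0, hEFx, pow_zero] at *
        simp only [Module.End.one_apply] at *
        rw [hEw, hHw, map_zero]
        push_cast
        module
      | succ j ih =>
        rw [← hFwj (j + 1), hEFx, ih, hFchain (j + 1), map_smul, hFwj]
        push_cast
        match_scalars
        ring
    -- μc is the natural number μ
    have hμc : μc = (μ : ℂ) := by
      have h0 : E ((F ^ (μ + 1)) w) = 0 := by rw [hwtop, map_zero]
      rw [hEwj μ] at h0
      rcases smul_eq_zero.mp h0 with h | h
      · rcases mul_eq_zero.mp h with h' | h'
        · exfalso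
          exact Nat.cast_add_one_ne_zero μ h'
        · linear_combination h'
      · exact absurd h (hwne μ le_rfl)
    have hHwj : ∀ j : ℕ, H ((F ^ j) w) = ((μ : ℂ) - 2 * j) • (F ^ j) w := by
      intro j
      rw [hFchain j, hμc]
      module
    have hEwj' : ∀ j : ℕ, E ((F ^ (j + 1)) w) = ((j + 1 : ℂ) * ((μ : ℂ) - j)) • (F ^ j) w := by
      intro j
      rw [hEwj j, hμc]
    -- linear independence of the chain
    have hindep : LinearIndependent ℂ (fun j : Fin (μ + 1) => (F ^ (j : ℕ)) w) := by
      refine eigen_indep H _ (fun j : Fin (μ + 1) => (μ : ℂ) - 2 * (j : ℕ)) ?_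
        (fun j => hHwj j) (fun j => hwne j (by omega))
      intro a b hab
      have : ((a : ℕ) : ℂ) = ((b : ℕ) : ℂ) := by
        have h2 : (2 : ℂ) * (a : ℕ) = 2 * (b : ℕ) := by linear_combination -hab
        have := mul_left_cancel₀ (two_ne_zero (α := ℂ)) h2
        exact this
      exact Fin.ext (Nat.cast_injective this)
    have hcoeff : ∀ g : Fin (μ + 1) → ℂ,
        (∑ j, g j • (F ^ (j : ℕ)) w) = 0 → ∀ j, g j = 0 :=
      fun g hg => Fintype.linearIndependent_iff.mp hindep g hg
    -- the submodule W
    set W : Submodule ℂ V :=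
      Submodule.span ℂ (Set.range fun j : Fin (μ + 1) => (F ^ (j : ℕ)) w) with hWdef
    have hmemW : ∀ j : ℕ, (F ^ j) w ∈ W := by
      intro j
      rcases le_or_gt j μ with hj | hj
      · exact Submodule.subset_span ⟨⟨j, by omega⟩, rfl⟩
      · rw [hwzero j hj]; exact W.zero_mem
    have hspan : ∀ x ∈ W, ∃ cf : Fin (μ + 1) → ℂ, ∑ j, cf j • (F ^ (j : ℕ)) w = x := by
      intro x hx
      exact (Submodule.mem_span_range_iff_exists_fun ℂ).mp hx
    have hWF : W ≤ W.comap F := by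
      rw [hWdef, Submodule.span_le]
      rintro _ ⟨j, rfl⟩
      simp only [SetLike.mem_coe, Submodule.mem_comap]
      rw [hFwj]
      exact hmemW _
    have hWH : W ≤ W.comap H := by
      rw [hWdef, Submodule.span_le]
      rintro _ ⟨j, rfl⟩
      simp only [SetLike.mem_coe, Submodule.mem_comap]
      rw [hHwj]
      exact W.smul_mem _ (hmemW _)
    have hWE : W ≤ W.comap E := by
      rw [hWdef, Submodule.span_le]
      rintro _ ⟨j, rfl⟩
      simp only [SetLike.mem_coe, Submodule.mem_comap]
      obtain ⟨jv, hjv⟩ := j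
      cases jv with
      | zero =>
        simp only [pow_zero, Module.End.one_apply]
        rw [hEw]
        exact W.zero_mem
      | succ i =>
        show E ((F ^ (i + 1)) w) ∈ W
        rw [hEwj' i]
        exact W.smul_mem _ (hmemW _)
    -- the quotient module
    set E' : Module.End ℂ (V ⧸ W) := W.mapQ W E hWE with hE'def
    set F' : Module.End ℂ (V ⧸ W) := W.mapQ W F hWF with hF'def
    set H' : Module.End ℂ (V ⧸ W) := W.mapQ W H hWH with hH'def
    have hmkE : ∀ x : V, E' (W.mkQ x) = W.mkQ (E x) := fun x => by
      rw [Submodule.mkQ_apply, Submodule.mkQ_apply, Submodule.mapQ_apply]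
    have hmkF : ∀ x : V, F' (W.mkQ x) = W.mkQ (F x) := fun x => by
      rw [Submodule.mkQ_apply, Submodule.mkQ_apply, Submodule.mapQ_apply]
    have hmkH : ∀ x : V, H' (W.mkQ x) = W.mkQ (H x) := fun x => by
      rw [Submodule.mkQ_apply, Submodule.mkQ_apply, Submodule.mapQ_apply]
    have hHE'' : H' * E' - E' * H' = (2 : ℂ) • E' := by
      apply Submodule.linearMap_qext
      ext x
      have hx := LinearMap.congr_fun hHE x
      simp only [LinearMap.sub_apply, Module.End.mul_apply, LinearMap.smul_apply] at hx
      simp only [LinearMap.comp_apply, LinearMap.sub_apply, Module.End.mul_apply,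
        LinearMap.smul_apply]
      rw [hmkE x, hmkH (E x), hmkH x, hmkE (H x), ← map_smul, ← map_sub, hx]
    have hHF'' : H' * F' - F' * H' = (-2 : ℂ) • F' := by
      apply Submodule.linearMap_qext
      ext x
      have hx := LinearMap.congr_fun hHF x
      simp only [LinearMap.sub_apply, Module.End.mul_apply, LinearMap.smul_apply] at hx
      simp only [LinearMap.comp_apply, LinearMap.sub_apply, Module.End.mul_apply,
        LinearMap.smul_apply]
      rw [hmkF x, hmkH (F x), hmkH x, hmkF (H x), ← map_smul, ← map_sub, hx]
    have hEF'' : E' * F' - F' * E' = H' := by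
      apply Submodule.linearMap_qext
      ext x
      have hx := LinearMap.congr_fun hEF x
      simp only [LinearMap.sub_apply, Module.End.mul_apply] at hx
      simp only [LinearMap.comp_apply, LinearMap.sub_apply, Module.End.mul_apply]
      rw [hmkE x, hmkF (E x), hmkF x, hmkE (F x), ← map_sub, hx, hmkH x]
    -- dimension drop
    have hWnontriv : Nontrivial W := by
      refine ⟨⟨w, ?_⟩, 0, ?_⟩
      · have := hmemW 0
        rwa [pow_zero, Module.End.one_apply] at this
      · intro hcon
        exact hw0 (by simpa using congrArg Subtype.val hcon)
    have hdimQ : finrank ℂ (V ⧸ W) ≤ N := by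
      have h1 := Submodule.finrank_quotient_add_finrank W
      have h2 : 0 < finrank ℂ W := Module.finrank_pos_iff.mpr hWnontriv
      omega
    -- apply induction hypothesis
    have hqv : H' (W.mkQ v) = (-(m : ℂ)) • W.mkQ v := by
      rw [hmkH, hv, map_smul]
    obtain ⟨u', hu'1, hu'2⟩ := IH E' F' H' hHE'' hHF'' hEF'' m (W.mkQ v) hqv hdimQ
    obtain ⟨u₀, rfl⟩ := W.mkQ_surjective u'
    have hFQ : ∀ x : V, (F' ^ m) (W.mkQ x) = W.mkQ ((F ^ m) x) := by
      intro x
      rw [hF'def, ← Submodule.mapQ_pow, Submodule.mkQ_apply, Submodule.mapQ_apply,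
        ← Submodule.mkQ_apply]
    have hyW : H u₀ - (m : ℂ) • u₀ ∈ W := by
      rw [← Submodule.Quotient.mk_eq_zero W, ← Submodule.mkQ_apply, map_sub, map_smul,
        ← hmkH u₀, hu'1, sub_self]
    have hxW : v - (F ^ m) u₀ ∈ W := by
      rw [← Submodule.Quotient.mk_eq_zero W, ← Submodule.mkQ_apply, map_sub, ← hFQ u₀, ← hu'2,
        sub_self]
    obtain ⟨cy, hcy⟩ := hspan _ hyW
    -- the correction z
    set zc : V := ∑ j : Fin (μ + 1),
        (if ((μ : ℂ) - 2 * (j : ℕ)) = (m : ℂ) then 0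
         else cy j / (((μ : ℂ) - 2 * (j : ℕ)) - m)) • (F ^ (j : ℕ)) w with hzc
    set ym : V := ∑ j : Fin (μ + 1),
        (if ((μ : ℂ) - 2 * (j : ℕ)) = (m : ℂ) then cy j else 0) • (F ^ (j : ℕ)) w with hym
    have hHz : H zc - (m : ℂ) • zc
        = ∑ j : Fin (μ + 1),
          (if ((μ : ℂ) - 2 * (j : ℕ)) = (m : ℂ) then 0 else cy j) • (F ^ (j : ℕ)) w := by
      rw [hzc, map_sum, Finset.smul_sum, ← Finset.sum_sub_distrib]
      refine Finset.sum_congr rfl fun j _ => ?_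
      rw [map_smul, hHwj j]
      by_cases hj : ((μ : ℂ) - 2 * (j : ℕ)) = (m : ℂ)
      · simp [hj]
      · have hne : ((μ : ℂ) - 2 * (j : ℕ)) - m ≠ 0 := sub_ne_zero.mpr hj
        rw [if_neg hj, if_neg hj, smul_smul, smul_smul, ← sub_smul]
        congr 1
        field_simp
    set u₁ : V := u₀ - zc with hu₁def
    have hu₁ : H u₁ = (m : ℂ) • u₁ + ym := by
      have hsub : H u₁ - (m : ℂ) • u₁ = ym := by
        rw [hu₁def, map_sub, smul_sub]
        have hre : H u₀ - H zc - ((m : ℂ) • u₀ - (m : ℂ) • zc)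
            = (H u₀ - (m : ℂ) • u₀) - (H zc - (m : ℂ) • zc) := by abel
        rw [hre, ← hcy, hHz, hym, ← Finset.sum_sub_distrib]
        refine Finset.sum_congr rfl fun j _ => ?_
        rw [← sub_smul]
        congr 1
        by_cases hj : ((μ : ℂ) - 2 * (j : ℕ)) = (m : ℂ) <;> simp [hj]
      rw [← hsub]
      abel
    have hHym : H ym = (m : ℂ) • ym := by
      rw [hym, map_sum, Finset.smul_sum]
      refine Finset.sum_congr rfl fun j _ => ?_
      rw [map_smul, hHwj j, smul_smul, smul_smul]
      by_cases hj : ((μ : ℂ) - 2 * (j : ℕ)) = (m : ℂ)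
      · rw [if_pos hj, hj, mul_comm]
      · simp [hj]
    have hFym : (F ^ m) ym = ∑ j : Fin (μ + 1),
        (if ((μ : ℂ) - 2 * (j : ℕ)) = (m : ℂ) then cy j else 0) • (F ^ ((j : ℕ) + m)) w := by
      rw [hym, map_sum]
      exact Finset.sum_congr rfl fun j _ => by rw [map_smul, hFmwj]
    set r : V := v - (F ^ m) u₁ with hrdef
    have hrW : r ∈ W := by
      have hr2 : r = (v - (F ^ m) u₀) + (F ^ m) zc := by
        rw [hrdef, hu₁def, map_sub]
        abel
      rw [hr2]
      refine W.add_mem hxW ?_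
      rw [hzc, map_sum]
      exact Submodule.sum_mem _ fun j _ => by
        rw [map_smul, hFmwj]
        exact W.smul_mem _ (hmemW _)
    obtain ⟨cr, hcr⟩ := hspan _ hrW
    -- key identities
    have key1 : H r + (m : ℂ) • r = -((F ^ m) ym) := by
      rw [hrdef, map_sub, hv, hFk m u₁, hu₁, map_add, map_smul]
      module
    have key2 : H ((F ^ m) ym) = (-(m : ℂ)) • (F ^ m) ym := by
      rw [hFk m ym, hHym, map_smul]
      module
    have key3 : H (H r + (m : ℂ) • r) + (m : ℂ) • (H r + (m : ℂ) • r) = 0 := by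
      rw [key1, map_neg, key2]
      module
    have hHr : H r + (m : ℂ) • r
        = ∑ j : Fin (μ + 1), (cr j * (((μ : ℂ) - 2 * (j : ℕ)) + m)) • (F ^ (j : ℕ)) w := by
      rw [← hcr, map_sum, Finset.smul_sum, ← Finset.sum_add_distrib]
      refine Finset.sum_congr rfl fun j _ => ?_
      rw [map_smul, hHwj j, smul_smul, smul_smul, ← add_smul]
      congr 1
      ring
    have hcr0 : ∀ j : Fin (μ + 1), (((μ : ℂ) - 2 * (j : ℕ)) + m) ≠ 0 → cr j = 0 := by
      intro j hj
      have h0 : ∑ jj : Fin (μ + 1),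
          ((cr jj * (((μ : ℂ) - 2 * (jj : ℕ)) + m)) * (((μ : ℂ) - 2 * (jj : ℕ)) + m))
            • (F ^ (jj : ℕ)) w = 0 := by
        calc ∑ jj : Fin (μ + 1),
            ((cr jj * (((μ : ℂ) - 2 * (jj : ℕ)) + m)) * (((μ : ℂ) - 2 * (jj : ℕ)) + m))
              • (F ^ (jj : ℕ)) w
            = H (H r + (m : ℂ) • r) + (m : ℂ) • (H r + (m : ℂ) • r) := by
              rw [hHr, map_sum, Finset.smul_sum, ← Finset.sum_add_distrib]
              refine (Finset.sum_congr rfl fun jj _ => ?_).symm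
              rw [map_smul, hHwj jj, smul_smul, smul_smul, ← add_smul]
              congr 1
              ring
          _ = 0 := key3
      have h1 := hcoeff _ h0 j
      rcases mul_eq_zero.mp h1 with h2 | h2
      · rcases mul_eq_zero.mp h2 with h3 | h3
        · exact h3
        · exact absurd h3 hj
      · exact absurd h2 hj
    have hsum0 : H r + (m : ℂ) • r = 0 := by
      rw [hHr]
      refine Finset.sum_eq_zero fun j _ => ?_
      by_cases hj : (((μ : ℂ) - 2 * (j : ℕ)) + m) = 0
      · rw [hj, mul_zero, zero_smul]
      · rw [hcr0 j hj, zero_mul, zero_smul]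
    have hFym0 : (F ^ m) ym = 0 := by
      have hk := key1
      rw [hsum0] at hk
      exact neg_eq_zero.mp hk.symm
    -- arithmetic characterizations of the conditions
    have condIff : ∀ j : ℕ, (((μ : ℂ) - 2 * j) = (m : ℂ)) ↔ μ = 2 * j + m := by
      intro j
      constructor
      · intro h
        have h2 : ((μ : ℕ) : ℂ) = ((2 * j + m : ℕ) : ℂ) := by push_cast; linear_combination h
        exact_mod_cast h2
      · intro h
        have h2 : ((μ : ℕ) : ℂ) = ((2 * j + m : ℕ) : ℂ) := by rw [h]
        push_cast at h2
        linear_combination h2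
    have condIff' : ∀ j : ℕ, (((μ : ℂ) - 2 * j) + m = 0) ↔ μ + m = 2 * j := by
      intro j
      constructor
      · intro h
        have h2 : ((μ + m : ℕ) : ℂ) = ((2 * j : ℕ) : ℂ) := by push_cast; linear_combination h
        exact_mod_cast h2
      · intro h
        have h2 : ((μ + m : ℕ) : ℂ) = ((2 * j : ℕ) : ℂ) := by rw [h]
        push_cast at h2
        linear_combination h2
    by_cases hex : ∃ j₀ : ℕ, j₀ ≤ μ ∧ μ = 2 * j₀ + m
    · obtain ⟨j₀, hj₀le, hj₀⟩ := hex
      have hj₀m : j₀ + m ≤ μ := by omega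
      have hcondunique : ∀ j : Fin (μ + 1),
          (((μ : ℂ) - 2 * (j : ℕ)) = (m : ℂ)) ↔ j = (⟨j₀, by omega⟩ : Fin (μ + 1)) := by
        intro j
        rw [condIff]
        constructor
        · intro h
          exact Fin.ext (by simp; omega)
        · intro h
          rw [h]
          exact hj₀
      have hcy0 : cy (⟨j₀, by omega⟩ : Fin (μ + 1)) = 0 := by
        have hsingle : (∑ j : Fin (μ + 1),
            (if ((μ : ℂ) - 2 * (j : ℕ)) = (m : ℂ) then cy j else 0) • (F ^ ((j : ℕ) + m)) w)
            = cy (⟨j₀, by omega⟩ : Fin (μ + 1)) • (F ^ (j₀ + m)) w := by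
          rw [Finset.sum_eq_single (⟨j₀, by omega⟩ : Fin (μ + 1))
            (fun b _ hb => by rw [if_neg (fun hc => hb ((hcondunique b).mp hc)), zero_smul])
            (fun hmem => absurd (Finset.mem_univ _) hmem)]
          rw [if_pos ((hcondunique _).mpr rfl)]
        rw [hFym, hsingle] at hFym0
        rcases smul_eq_zero.mp hFym0 with h | h
        · exact h
        · exact absurd h (hwne _ hj₀m)
      have hym0 : ym = 0 := by
        rw [hym]
        refine Finset.sum_eq_zero fun j _ => ?_
        by_cases hc : ((μ : ℂ) - 2 * (j : ℕ)) = (m : ℂ)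
        · rw [if_pos hc, (hcondunique j).mp hc, hcy0, zero_smul]
        · rw [if_neg hc, zero_smul]
      have hu₁' : H u₁ = (m : ℂ) • u₁ := by rw [hu₁, hym0, add_zero]
      have hrval : r = cr (⟨j₀ + m, by omega⟩ : Fin (μ + 1)) • (F ^ (j₀ + m)) w := by
        rw [← hcr]
        rw [Finset.sum_eq_single (⟨j₀ + m, by omega⟩ : Fin (μ + 1))
          (fun b _ hb => by
            rw [hcr0 b (fun hc => hb (Fin.ext (by
              have hnat := (condIff' (b : ℕ)).mp hc
              simp
              omega))), zero_smul])
          (fun hmem => absurd (Finset.mem_univ _) hmem)]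
      refine ⟨u₁ + cr (⟨j₀ + m, by omega⟩ : Fin (μ + 1)) • (F ^ j₀) w, ?_, ?_⟩
      · rw [map_add, map_smul, hu₁', hHwj j₀, smul_add]
        congr 1
        rw [smul_smul, smul_smul]
        congr 1
        rw [(condIff j₀).mpr hj₀]
        ring
      · rw [map_add, map_smul, hFmwj m j₀]
        have hveq : v = (F ^ m) u₁ + r := by rw [hrdef]; abel
        rw [hveq, hrval]
    · have hym0 : ym = 0 := by
        rw [hym]
        refine Finset.sum_eq_zero fun j _ => ?_
        rw [if_neg, zero_smul]
        intro hc
        have hjle := j.isLt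
        exact hex ⟨(j : ℕ), by omega, (condIff (j : ℕ)).mp hc⟩
      have hu₁' : H u₁ = (m : ℂ) • u₁ := by rw [hu₁, hym0, add_zero]
      have hr0 : r = 0 := by
        rw [← hcr]
        refine Finset.sum_eq_zero fun j _ => ?_
        rw [hcr0 j ?_, zero_smul]
        intro hc
        have hnat : μ + m = 2 * (j : ℕ) := (condIff' (j : ℕ)).mp hc
        have hjle := j.isLt
        exact hex ⟨(j : ℕ) - m, by omega, by omega⟩
      refine ⟨u₁, hu₁', ?_⟩
      have hveq : v = (F ^ m) u₁ + r := by rw [hrdef]; abel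
      rw [hveq, hr0, add_zero]



end Sl2Helper

/-- Let `V` be a finite-dimensional representation of `𝔰𝔩₂(ℂ)`, given by
endomorphisms `E, F, H` with `[H,E] = 2E`, `[H,F] = -2F`, `[E,F] = H`. If `H v = -m v`
for a positive integer `m`, then `v = F^m v'` for some `v' ∈ V`. -/
theorem sl2_negative_weight_in_image_of_F_pow
    {V : Type*} [AddCommGroup V] [Module ℂ V] [FiniteDimensional ℂ V]
    (E F H : Module.End ℂ V)
    (hHE : H * E - E * H = (2 : ℂ) • E)
    (hHF : H * F - F * H = (-2 : ℂ) • F)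
    (hEF : E * F - F * E = H)
    (m : ℕ) (hm : 0 < m) (v : V) (hv : H v = (-(m : ℂ)) • v) :
    ∃ v' : V, v = (F ^ m) v' := by
  obtain ⟨u, -, hu⟩ := Sl2Helper.sl2_aux (Module.finrank ℂ V) E F H hHE hHF hEF m v hv le_rfl
  exact ⟨u, hu⟩
end
end
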